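/- Let A, B ⊆ ℝ^d be finite sets with |A| = m and |B| = d+1. Assume that B is proper d-dimensional, that A is contained in the convex hull of B, and that |A ∩ B| ≤ 1. Let k be a positive integer. Then |A + kB| = m·C(d+k, k). -/
import Mathlib


open Pointwise

/-- The `k`-fold sumset `B + B + ⋯ + B` (`k` summands). -/
def kfoldSumset {α : Type*} [AddCommMonoid α] [DecidableEq α]
    (k : ℕ) (B : Finset α) : Finset α :=
  ∑ _i ∈ Finset.range k, B

namespace SimplexCaseAux

variable {d : ℕ} {B : Finset (Fin d → ℝ)}

/-- Sum of a size-`k` multiset of elements of `B`. -/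
noncomputable def symSum (k : ℕ) (m : Sym {x // x ∈ B} k) : Fin d → ℝ :=
  (Multiset.map Subtype.val (m : Multiset {x // x ∈ B})).sum

lemma symSum_cons {k : ℕ} (a : {x // x ∈ B}) (m : Sym {x // x ∈ B} k) :
    symSum (k + 1) (a ::ₛ m) = (a : Fin d → ℝ) + symSum k m := by
  simp [symSum, Sym.coe_cons]

lemma kfold_eq (k : ℕ) :
    kfoldSumset k B = Finset.univ.image (symSum (B := B) k) := by
  classical
  induction k with
  | zero =>
      ext x
      simp only [kfoldSumset, Finset.range_zero, Finset.sum_empty, Finset.mem_zero,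
        Finset.mem_image, Finset.mem_univ, true_and]
      constructor
      · rintro rfl
        exact ⟨(Sym.nil : Sym {x // x ∈ B} 0), by simp [symSum]⟩
      · rintro ⟨m, rfl⟩
        have : (m : Multiset {x // x ∈ B}) = 0 := Multiset.card_eq_zero.1 m.2
        simp [symSum, this]
  | succ k ih =>
      have h1 : kfoldSumset (k + 1) B = kfoldSumset k B + B := by
        unfold kfoldSumset
        rw [Finset.sum_range_succ]
      rw [h1, ih]
      ext x
      simp only [Finset.mem_add, Finset.mem_image, Finset.mem_univ, true_and]
      constructor
      · rintro ⟨y, ⟨m, rfl⟩, b, hb, rfl⟩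
        exact ⟨(⟨b, hb⟩ ::ₛ m), by simp [symSum_cons, add_comm]⟩
      · rintro ⟨m, rfl⟩
        obtain ⟨a, m', rfl⟩ := m.exists_eq_cons_of_succ
        exact ⟨symSum k m', ⟨m', rfl⟩, a, a.2, by rw [symSum_cons, add_comm]⟩

lemma symSum_eq_weighted {k : ℕ} (m : Sym {x // x ∈ B} k) :
    symSum k m = ∑ b : {x // x ∈ B},
      (((m : Multiset {x // x ∈ B}).count b : ℝ)) • (b : Fin d → ℝ) := by
  classical
  rw [symSum, Finset.sum_multiset_map_count (m : Multiset {x // x ∈ B}) Subtype.val]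
  rw [Finset.sum_subset (Finset.subset_univ (m : Multiset {x // x ∈ B}).toFinset)]
  · exact Finset.sum_congr rfl fun b _ => (Nat.cast_smul_eq_nsmul ℝ _ _).symm
  · intro b _ hb
    rw [Multiset.count_eq_zero_of_notMem (by simpa using hb), zero_nsmul]

lemma symSum_count_sum {k : ℕ} (m : Sym {x // x ∈ B} k) :
    ∑ b : {x // x ∈ B}, ((m : Multiset {x // x ∈ B}).count b) = k := by
  classical
  rw [← Finset.sum_subset (Finset.subset_univ (m : Multiset {x // x ∈ B}).toFinset)]
  · rw [Multiset.toFinset_sum_count_eq]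
    exact m.2
  · intro b _ hb
    exact Multiset.count_eq_zero_of_notMem (by simpa using hb)

lemma affineIndep (hB : B.card = d + 1)
    (hBspan : affineSpan ℝ (B : Set (Fin d → ℝ)) = ⊤) :
    AffineIndependent ℝ (fun b : {x // x ∈ B} => (b : Fin d → ℝ)) := by
  have hc : Fintype.card {x // x ∈ B} = d + 1 := by
    rw [Fintype.card_coe, hB]
  rw [affineIndependent_iff_finrank_vectorSpan_eq ℝ _ hc]
  have hr : Set.range (fun b : {x // x ∈ B} => (b : Fin d → ℝ)) = (B : Set (Fin d → ℝ)) :=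
    Subtype.range_coe
  rw [hr, ← direction_affineSpan, hBspan, AffineSubspace.direction_top, finrank_top]
  exact Module.finrank_fin_fun ℝ

lemma coeff_unique (hind : AffineIndependent ℝ (fun b : {x // x ∈ B} => (b : Fin d → ℝ)))
    (w₁ w₂ : {x // x ∈ B} → ℝ)
    (hs : ∑ b, w₁ b = ∑ b, w₂ b)
    (hv : ∑ b, w₁ b • (b : Fin d → ℝ) = ∑ b, w₂ b • (b : Fin d → ℝ)) :
    w₁ = w₂ := by
  classical
  have h := affineIndependent_iff.1 hind Finset.univ (w₁ - w₂)
    (by simp only [Pi.sub_apply, Finset.sum_sub_distrib, hs, sub_self])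
    (by simp only [Pi.sub_apply, sub_smul, Finset.sum_sub_distrib, hv, sub_self])
  funext b
  have := h b (Finset.mem_univ b)
  simpa [sub_eq_zero] using this

lemma sum_eq_vertex (w : {x // x ∈ B} → ℝ) (hn : ∀ b, 0 ≤ w b)
    (hs : ∑ b, w b = 1) (b₀ : {x // x ∈ B}) (h1 : 1 ≤ w b₀) :
    ∑ b, w b • (b : Fin d → ℝ) = (b₀ : Fin d → ℝ) := by
  classical
  have hle : w b₀ ≤ 1 := hs ▸ Finset.single_le_sum (fun b _ => hn b) (Finset.mem_univ b₀)
  have hb₀ : w b₀ = 1 := le_antisymm hle h1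
  have hzero : ∀ b, b ≠ b₀ → w b = 0 := by
    have hsum0 : ∑ b ∈ Finset.univ.erase b₀, w b = 0 := by
      have := Finset.add_sum_erase Finset.univ w (Finset.mem_univ b₀)
      rw [hs, hb₀] at this
      linarith
    intro b hb
    have := (Finset.sum_eq_zero_iff_of_nonneg (fun b _ => hn b)).1 hsum0 b
      (Finset.mem_erase.2 ⟨hb, Finset.mem_univ b⟩)
    exact this
  rw [Finset.sum_eq_single b₀ (fun b _ hb => by rw [hzero b hb, zero_smul])
    (fun h => absurd (Finset.mem_univ b₀) h), hb₀, one_smul]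

lemma one_le_of_gap (x y : ℝ) (c₁ c₂ : ℕ) (h : x + (c₁ : ℝ) = y + (c₂ : ℝ))
    (hy : 0 ≤ y) (hlt : y < x) : 1 ≤ x := by
  have hc : (c₁ : ℝ) < (c₂ : ℝ) := by linarith
  have hcn : c₁ < c₂ := by exact_mod_cast hc
  have hc1 : (c₁ : ℝ) + 1 ≤ (c₂ : ℝ) := by exact_mod_cast hcn
  linarith

lemma no_gap {A : Finset (Fin d → ℝ)} (hAcapB : (A ∩ B).card ≤ 1)
    (α₁ α₂ : {x // x ∈ B} → ℝ) (c₁ c₂ : {x // x ∈ B} → ℕ)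
    (h1n : ∀ b, 0 ≤ α₁ b) (h1s : ∑ b, α₁ b = 1)
    (h2n : ∀ b, 0 ≤ α₂ b) (h2s : ∑ b, α₂ b = 1)
    {a₁ a₂ : Fin d → ℝ} (ha₁ : a₁ ∈ A) (ha₂ : a₂ ∈ A)
    (ha₁e : ∑ b, α₁ b • (b : Fin d → ℝ) = a₁)
    (ha₂e : ∑ b, α₂ b • (b : Fin d → ℝ) = a₂)
    (hcoeff : ∀ b, α₁ b + (c₁ b : ℝ) = α₂ b + (c₂ b : ℝ))
    (b₀ : {x // x ∈ B}) (hlt : α₂ b₀ < α₁ b₀) : False := by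
  classical
  have h1 : 1 ≤ α₁ b₀ := one_le_of_gap _ _ _ _ (hcoeff b₀) (h2n b₀) hlt
  have he₁ : a₁ = (b₀ : Fin d → ℝ) := by
    rw [← ha₁e]; exact sum_eq_vertex α₁ h1n h1s b₀ h1
  -- find b₁ with α₁ b₁ < α₂ b₁
  have hex : ∃ b₁, α₁ b₁ < α₂ b₁ := by
    by_contra h
    push_neg at h
    have := Finset.sum_lt_sum (f := α₂) (g := α₁)
      (fun b _ => h b) ⟨b₀, Finset.mem_univ b₀, hlt⟩
    rw [h1s, h2s] at this
    exact lt_irrefl _ this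
  obtain ⟨b₁, hb₁⟩ := hex
  have h2 : 1 ≤ α₂ b₁ :=
    one_le_of_gap _ _ _ _ (hcoeff b₁).symm (h1n b₁) hb₁
  have he₂ : a₂ = (b₁ : Fin d → ℝ) := by
    rw [← ha₂e]; exact sum_eq_vertex α₂ h2n h2s b₁ h2
  have hne : b₀ ≠ b₁ := by
    rintro rfl
    exact absurd hb₁ (not_lt_of_gt hlt)
  have hne' : a₁ ≠ a₂ := by
    rw [he₁, he₂]
    exact fun h => hne (Subtype.coe_injective h)
  have hm₁ : a₁ ∈ A ∩ B := Finset.mem_inter.2 ⟨ha₁, he₁ ▸ b₀.2⟩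
  have hm₂ : a₂ ∈ A ∩ B := Finset.mem_inter.2 ⟨ha₂, he₂ ▸ b₁.2⟩
  exact hne' (Finset.card_le_one.1 hAcapB _ hm₁ _ hm₂)

end SimplexCaseAux

open SimplexCaseAux in
theorem simplex_case_small_intersection (d m k : ℕ) (hk : 0 < k)
    (A B : Finset (Fin d → ℝ))
    (hm : A.card = m) (hB : B.card = d + 1)
    (hBspan : affineSpan ℝ (B : Set (Fin d → ℝ)) = ⊤)
    (hAB : (A : Set (Fin d → ℝ)) ⊆ convexHull ℝ (B : Set (Fin d → ℝ)))
    (hAcapB : (A ∩ B).card ≤ 1) :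
    (A + kfoldSumset k B).card = m * (d + k).choose k := by
  classical
  have hind := affineIndep hB hBspan
  -- weights for elements of A
  have hAw : ∀ a ∈ A, ∃ w : {x // x ∈ B} → ℝ,
      (∀ b, 0 ≤ w b) ∧ (∑ b, w b = 1) ∧ ∑ b, w b • (b : Fin d → ℝ) = a := by
    intro a ha
    obtain ⟨w, hw0, hw1, hwa⟩ := Finset.mem_convexHull'.1 (hAB ha)
    refine ⟨fun b => w (b : Fin d → ℝ), fun b => hw0 _ b.2, ?_, ?_⟩
    · rw [← hw1]; exact Finset.sum_coe_sort B w
    · rw [← hwa]; exact Finset.sum_coe_sort B (fun y => w y • y)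
  -- injectivity of symSum
  have hsyminj : Function.Injective (symSum (B := B) k) := by
    intro m₁ m₂ hmm
    have h := coeff_unique hind
      (fun b => ((m₁ : Multiset {x // x ∈ B}).count b : ℝ))
      (fun b => ((m₂ : Multiset {x // x ∈ B}).count b : ℝ))
      (by rw [← Nat.cast_sum, ← Nat.cast_sum, symSum_count_sum, symSum_count_sum])
      (by rw [← symSum_eq_weighted, ← symSum_eq_weighted, hmm])
    have hcount : ∀ b, (m₁ : Multiset {x // x ∈ B}).count b
        = (m₂ : Multiset {x // x ∈ B}).count b := by
      intro b
      exact_mod_cast congrFun h b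
    ext b
    · exact hcount b
  have hScard : (kfoldSumset k B).card = (d + k).choose k := by
    rw [kfold_eq, Finset.card_image_of_injective _ hsyminj, Finset.card_univ,
      Sym.card_sym_eq_choose, Fintype.card_coe, hB]
    congr 1
    omega
  -- main injectivity
  have hinj : Set.InjOn (fun p : (Fin d → ℝ) × (Fin d → ℝ) => p.1 + p.2)
      ((A ×ˢ kfoldSumset k B : Finset _) : Set _) := by
    rintro ⟨a₁, s₁⟩ hp₁ ⟨a₂, s₂⟩ hp₂ h
    simp only [Finset.coe_product, Set.mem_prod, Finset.mem_coe] at hp₁ hp₂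
    obtain ⟨ha₁, hs₁⟩ := hp₁
    obtain ⟨ha₂, hs₂⟩ := hp₂
    simp only at h
    obtain ⟨α₁, h1n, h1s, h1e⟩ := hAw a₁ ha₁
    obtain ⟨α₂, h2n, h2s, h2e⟩ := hAw a₂ ha₂
    rw [kfold_eq, Finset.mem_image] at hs₁ hs₂
    obtain ⟨m₁, -, rfl⟩ := hs₁
    obtain ⟨m₂, -, rfl⟩ := hs₂
    set c₁ : {x // x ∈ B} → ℕ := fun b => (m₁ : Multiset {x // x ∈ B}).count b with hc₁
    set c₂ : {x // x ∈ B} → ℕ := fun b => (m₂ : Multiset {x // x ∈ B}).count b with hc₂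
    have hcomb : ∀ b, α₁ b + (c₁ b : ℝ) = α₂ b + (c₂ b : ℝ) := by
      have := coeff_unique hind (fun b => α₁ b + (c₁ b : ℝ)) (fun b => α₂ b + (c₂ b : ℝ))
        (by
          rw [Finset.sum_add_distrib, Finset.sum_add_distrib, h1s, h2s,
            ← Nat.cast_sum, ← Nat.cast_sum]
          simp [hc₁, hc₂, symSum_count_sum])
        (by
          simp only [add_smul, Finset.sum_add_distrib, h1e, h2e]
          rw [← symSum_eq_weighted, ← symSum_eq_weighted]
          exact h)
      exact fun b => congrFun this b
    by_cases hαeq : α₁ = α₂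
    · have haa : a₁ = a₂ := by rw [← h1e, ← h2e, hαeq]
      have hss : symSum k m₁ = symSum k m₂ := by
        rw [haa] at h
        exact add_left_cancel h
      rw [haa, hsyminj hss]
    · obtain ⟨b₀, hb₀⟩ : ∃ b₀, α₁ b₀ ≠ α₂ b₀ := by
        by_contra hcon
        push_neg at hcon
        exact hαeq (funext hcon)
      rcases lt_or_gt_of_ne hb₀ with hlt | hlt
      · exact absurd (no_gap hAcapB α₂ α₁ c₂ c₁ h2n h2s h1n h1s ha₂ ha₁ h2e h1e
          (fun b => (hcomb b).symm) b₀ hlt) (fun h => h)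
      · exact absurd (no_gap hAcapB α₁ α₂ c₁ c₂ h1n h1s h2n h2s ha₁ ha₂ h1e h2e
          hcomb b₀ hlt) (fun h => h)
  calc (A + kfoldSumset k B).card
      = ((A ×ˢ kfoldSumset k B).image (fun p : (Fin d → ℝ) × (Fin d → ℝ) => p.1 + p.2)).card := by
        rw [Finset.image_add_product]
    _ = (A ×ˢ kfoldSumset k B).card := Finset.card_image_of_injOn hinj
    _ = m * (d + k).choose k := by
        rw [Finset.card_product, hm, hScard]
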